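/- Let G = (V,E) be the directed spanner instance built from a projection games instance in which every vertex of L has degree exactly K ≥ 1, with parameter k ≥ 2, let y* be a feasible solution to SDP_Proj^{r+2} (r ≥ 0), and let y' be built from y*. Then for every edge (u,v) ∈ E_L ∪ E_R and every z ∈ Z^{u,v} with respect to stretch t = 2k−1, the slack moment matrix with (I,J) entry ∑_{e∈E} z(e)·y'_{I∪J∪{e}} − y'_{I∪J}, indexed by subsets I, J ⊆ E with |I|, |J| ≤ r, is positive semidefinite. -/

import Mathlib

open Finset

/-- A set of (vertex, label) pairs is *inconsistent* if it assigns two different labels to the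
same vertex. -/
def Inconsistent {W Sg : Type*} (Ψ : Finset (W × Sg)) : Prop :=
  ∃ v σ σ', σ ≠ σ' ∧ (v, σ) ∈ Ψ ∧ (v, σ') ∈ Ψ

/-- Feasibility for the level-`r` Lasserre SDP for projection games (`SDP_Proj^r`) on the
vertex set `W` (`= L ⊕ R`) with alphabet `Sg`: `y ∅ = 1`, the moment matrix
`(y_{Ψ₁ ∪ Ψ₂})_{|Ψ₁|,|Ψ₂| ≤ r}` is positive semidefinite, and for every vertex `v` and all
`Ψ₁, Ψ₂` with `|Ψ₁|, |Ψ₂| ≤ r` one has `∑_{σ} y_{Ψ₁∪Ψ₂∪{(v,σ)}} = y_{Ψ₁∪Ψ₂}`. -/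
def ProjFeasible {W Sg : Type*} [Fintype W] [Fintype Sg] [DecidableEq W] [DecidableEq Sg]
    (r : ℕ) (y : Finset (W × Sg) → ℝ) : Prop :=
  y ∅ = 1 ∧
  (Matrix.of fun Ψ₁ Ψ₂ : {S : Finset (W × Sg) // S.card ≤ r} => y (Ψ₁.1 ∪ Ψ₂.1)).PosSemidef ∧
  ∀ (v : W) (Ψ₁ Ψ₂ : Finset (W × Sg)), Ψ₁.card ≤ r → Ψ₂.card ≤ r →
    ∑ σ : Sg, y ((Ψ₁ ∪ Ψ₂) ∪ {(v, σ)}) = y (Ψ₁ ∪ Ψ₂)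

/-- A directed path in the graph with edge set `E`, from `u` to `v`, given as its (nonempty)
list of edges: consecutive edges are incident, the first edge starts at `u`, the last edge ends
at `v`, and no vertex is visited twice. -/
def IsDirPath {V : Type*} [DecidableEq V] (E : Finset (V × V)) (u v : V)
    (p : List (V × V)) : Prop :=
  p ≠ [] ∧ (∀ e ∈ p, e ∈ E) ∧ Option.map Prod.fst p.head? = some u ∧
    Option.map Prod.snd p.getLast? = some v ∧
    List.Chain' (fun e f => e.2 = f.1) p ∧ (u :: p.map Prod.snd).Nodup

/-- `z ∈ Z^{u,v}` (with respect to stretch `t`): a fractional cut against the stretch-`t`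
paths from `u` to `v`, i.e. `z : E → [0,1]` with `∑_{e ∈ P} z e ≥ 1` for every path
`P ∈ 𝒫_{u,v}` (at most `t` edges). -/
def InZ {V : Type*} [DecidableEq V] (E : Finset (V × V)) (t : ℕ) (u v : V)
    (z : V × V → ℝ) : Prop :=
  (∀ e ∈ E, 0 ≤ z e ∧ z e ≤ 1) ∧
  ∀ p : List (V × V), IsDirPath E u v p → p.length ≤ t → 1 ≤ (p.map z).sum

/-- A `t`-spanner of the directed graph with edge set `E`: a subset `S ⊆ E` such that every
edge `(u,v) ∈ E` is spanned by a directed path from `u` to `v` of at most `t` edges,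
all belonging to `S`. -/
def IsSpanner {V : Type*} [DecidableEq V] (E S : Finset (V × V)) (t : ℕ) : Prop :=
  S ⊆ E ∧ ∀ e ∈ E, ∃ p : List (V × V), IsDirPath S e.1 e.2 p ∧ p.length ≤ t

/-- The moment matrix `(y_{I ∪ J})`, indexed by the subsets `I, J ⊆ E` with `|I|, |J| ≤ r`. -/
def momentMatrixE {α : Type*} [Fintype α] [DecidableEq α] (E : Finset α) (r : ℕ)
    (y : Finset α → ℝ) :
    Matrix {S : Finset α // S ⊆ E ∧ S.card ≤ r} {S : Finset α // S ⊆ E ∧ S.card ≤ r} ℝ :=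
  Matrix.of fun I J => y (I.1 ∪ J.1)

/-- The slack moment matrix `(∑_{e ∈ E} z e · y_{I∪J∪{e}} − y_{I∪J})`, indexed by the subsets
`I, J ⊆ E` with `|I|, |J| ≤ r`. -/
def slackMatrixE {α : Type*} [Fintype α] [DecidableEq α] (E : Finset α) (r : ℕ)
    (y : Finset α → ℝ) (z : α → ℝ) :
    Matrix {S : Finset α // S ⊆ E ∧ S.card ≤ r} {S : Finset α // S ⊆ E ∧ S.card ≤ r} ℝ :=
  Matrix.of fun I J => (∑ e ∈ E, z e * y (insert e (I.1 ∪ J.1))) - y (I.1 ∪ J.1)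

/-- The ambient vertex type for the directed `(2k−1)`-spanner instance built from a projection
games instance with left vertices `L`, right vertices `R` and alphabet `Sg`; `D` is the number
of duplicate vertices (`D = k·K·|Σ|`) and `T` the number of internal vertices of each middle
path (`T = 2k−4`).  The five summands are: the label vertices `c_{i,σ}`, the duplicate vertices
`c_i^l`, the label vertices `x_{j,σ}`, the duplicate vertices `x_j^l`, and the middle-path
vertices `w_{i,j,σL,σR,t}`. -/
abbrev SpV (L R Sg : Type) (D T : ℕ) : Type :=
  (L × Sg) ⊕ (L × Fin D) ⊕ (R × Sg) ⊕ (R × Fin D) ⊕ (L × R × Sg × Sg × Fin T)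

namespace SpV

variable {L R Sg : Type} {D T : ℕ}

/-- The label vertex `c_{i,σ}`. -/
def cLab (i : L) (σ : Sg) : SpV L R Sg D T := Sum.inl (i, σ)

/-- The duplicate vertex `c_i^l`. -/
def cDup (i : L) (l : Fin D) : SpV L R Sg D T := Sum.inr (Sum.inl (i, l))

/-- The label vertex `x_{j,σ}`. -/
def xLab (j : R) (σ : Sg) : SpV L R Sg D T := Sum.inr (Sum.inr (Sum.inl (j, σ)))

/-- The duplicate vertex `x_j^l`. -/
def xDup (j : R) (l : Fin D) : SpV L R Sg D T :=
  Sum.inr (Sum.inr (Sum.inr (Sum.inl (j, l))))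

/-- The middle-path vertex `w_{i,j,σL,σR,t}`. -/
def mid (i : L) (j : R) (σL σR : Sg) (t : Fin T) : SpV L R Sg D T :=
  Sum.inr (Sum.inr (Sum.inr (Sum.inr (i, j, σL, σR, t))))

end SpV

set_option synthInstance.maxSize 1024 in
instance SpV.instDecidableEq {L R Sg : Type} [DecidableEq L] [DecidableEq R] [DecidableEq Sg]
    {D T : ℕ} : DecidableEq (SpV L R Sg D T) := inferInstance

instance SpV.instFintype {L R Sg : Type} [Fintype L] [Fintype R] [Fintype Sg] {D T : ℕ} :
    Fintype (SpV L R Sg D T) := inferInstance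

namespace Spanner

/-- The number `k·K·|Σ|` of duplicate vertices per projection-games vertex. -/
abbrev numDup (Sg : Type) [Fintype Sg] (k K : ℕ) : ℕ := k * K * Fintype.card Sg

/-- The vertex type of the directed spanner instance with parameters `k, K`. -/
abbrev Vt (L R Sg : Type) [Fintype Sg] (k K : ℕ) : Type :=
  SpV L R Sg (numDup Sg k K) (2 * k - 4)

/-- The edge set `E_L = {(c_i^l, c_{i,σ})}`. -/
def ELedges (L R Sg : Type) [Fintype L] [Fintype R] [Fintype Sg]
    [DecidableEq L] [DecidableEq R] [DecidableEq Sg] (k K : ℕ) :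
    Finset (Vt L R Sg k K × Vt L R Sg k K) :=
  Finset.univ.image fun p : L × Fin (numDup Sg k K) × Sg =>
    (SpV.cDup p.1 p.2.1, SpV.cLab p.1 p.2.2)

/-- The edge set `E_R = {(x_{j,σ}, x_j^l)}`. -/
def ERedges (L R Sg : Type) [Fintype L] [Fintype R] [Fintype Sg]
    [DecidableEq L] [DecidableEq R] [DecidableEq Sg] (k K : ℕ) :
    Finset (Vt L R Sg k K × Vt L R Sg k K) :=
  Finset.univ.image fun p : R × Fin (numDup Sg k K) × Sg =>
    (SpV.xLab p.1 p.2.2, SpV.xDup p.1 p.2.1)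

/-- The edge set `E_LStars = {(c_{i,1}, c_{i,σ}), (c_{i,σ}, c_{i,1}) : σ ≠ 1}`
(`σ0` plays the role of the fixed label `1 ∈ Σ`). -/
def ELStars (L R : Type) {Sg : Type} [Fintype L] [Fintype R] [Fintype Sg]
    [DecidableEq L] [DecidableEq R] [DecidableEq Sg] (σ0 : Sg) (k K : ℕ) :
    Finset (Vt L R Sg k K × Vt L R Sg k K) :=
  ((Finset.univ.filter fun p : L × Sg => p.2 ≠ σ0).image fun p =>
      (SpV.cLab p.1 σ0, SpV.cLab p.1 p.2)) ∪
  ((Finset.univ.filter fun p : L × Sg => p.2 ≠ σ0).image fun p =>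
      (SpV.cLab p.1 p.2, SpV.cLab p.1 σ0))

/-- The edge set `E_RStars = {(x_{j,1}, x_{j,σ}), (x_{j,σ}, x_{j,1}) : σ ≠ 1}`. -/
def ERStars (L R : Type) {Sg : Type} [Fintype L] [Fintype R] [Fintype Sg]
    [DecidableEq L] [DecidableEq R] [DecidableEq Sg] (σ0 : Sg) (k K : ℕ) :
    Finset (Vt L R Sg k K × Vt L R Sg k K) :=
  ((Finset.univ.filter fun p : R × Sg => p.2 ≠ σ0).image fun p =>
      (SpV.xLab p.1 σ0, SpV.xLab p.1 p.2)) ∪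
  ((Finset.univ.filter fun p : R × Sg => p.2 ≠ σ0).image fun p =>
      (SpV.xLab p.1 p.2, SpV.xLab p.1 σ0))

/-- The edge set `E_Outer = {(c_i^l, x_j^l) : {c_i, x_j} ∈ E_Proj, l ∈ [kK|Σ|]}`. -/
def EOuter {L R : Type} (Sg : Type) [Fintype L] [Fintype R] [Fintype Sg]
    [DecidableEq L] [DecidableEq R] [DecidableEq Sg]
    (Eproj : Finset (L × R)) (k K : ℕ) :
    Finset (Vt L R Sg k K × Vt L R Sg k K) :=
  (Eproj ×ˢ (Finset.univ : Finset (Fin (numDup Sg k K)))).image fun p =>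
    (SpV.cDup p.1.1 p.2, SpV.xDup p.1.2 p.2)

/-- The vertex sequence `c_{i,σL}, w_{i,j,σL,σR,1}, …, w_{i,j,σL,σR,2k−4}, x_{j,σR}` of the
middle path (for `k = 2` it is just `c_{i,σL}, x_{j,σR}`). -/
def midVerts {L R Sg : Type} [Fintype Sg] (k K : ℕ) (i : L) (j : R) (σL σR : Sg) :
    List (Vt L R Sg k K) :=
  (SpV.cLab i σL :: (List.finRange (2 * k - 4)).map fun t => SpV.mid i j σL σR t) ++
    [SpV.xLab j σR]

/-- The list of consecutive edges of a vertex sequence. -/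
def pathEdges {V : Type*} (vs : List V) : List (V × V) := vs.zip vs.tail

/-- The edge list `E_M^{i,j,σL,σR}` of the middle path from `c_{i,σL}` to `x_{j,σR}`. -/
def EMpath {L R Sg : Type} [Fintype Sg] (k K : ℕ) (i : L) (j : R) (σL σR : Sg) :
    List (Vt L R Sg k K × Vt L R Sg k K) :=
  pathEdges (midVerts k K i j σL σR)

/-- The edge set `E_M = ⋃_{ {c_i,x_j} ∈ E_Proj, (σL,σR) ∈ π_{i,j} } E_M^{i,j,σL,σR}`. -/
def EMedges {L R Sg : Type} [Fintype L] [Fintype R] [Fintype Sg]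
    [DecidableEq L] [DecidableEq R] [DecidableEq Sg]
    (Eproj : Finset (L × R)) (π : L → R → Sg → Sg) (k K : ℕ) :
    Finset (Vt L R Sg k K × Vt L R Sg k K) :=
  Eproj.biUnion fun e => (Finset.univ : Finset Sg).biUnion fun σL =>
    (EMpath k K e.1 e.2 σL (π e.1 e.2 σL)).toFinset

/-- The edge set `E = E_L ∪ E_LStars ∪ E_M ∪ E_RStars ∪ E_R ∪ E_Outer` of the directed
spanner instance. -/
def Edges {L R Sg : Type} [Fintype L] [Fintype R] [Fintype Sg]
    [DecidableEq L] [DecidableEq R] [DecidableEq Sg]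
    (Eproj : Finset (L × R)) (π : L → R → Sg → Sg) (σ0 : Sg) (k K : ℕ) :
    Finset (Vt L R Sg k K × Vt L R Sg k K) :=
  ELedges L R Sg k K ∪ ELStars L R σ0 k K ∪ EMedges Eproj π k K ∪
    ERStars L R σ0 k K ∪ ERedges L R Sg k K ∪ EOuter Sg Eproj k K

/-- The vertex set `V = L_Labels ∪ L_Dups ∪ R_Labels ∪ R_Dups ∪ M_Paths` of the directed
spanner instance. -/
def Verts {L R Sg : Type} [Fintype L] [Fintype R] [Fintype Sg]
    [DecidableEq L] [DecidableEq R] [DecidableEq Sg]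
    (Eproj : Finset (L × R)) (π : L → R → Sg → Sg) (k K : ℕ) :
    Finset (Vt L R Sg k K) :=
  (Finset.univ.image fun p : L × Sg => SpV.cLab p.1 p.2) ∪
  (Finset.univ.image fun p : L × Fin (numDup Sg k K) => SpV.cDup p.1 p.2) ∪
  (Finset.univ.image fun p : R × Sg => SpV.xLab p.1 p.2) ∪
  (Finset.univ.image fun p : R × Fin (numDup Sg k K) => SpV.xDup p.1 p.2) ∪
  (Eproj.biUnion fun e => (Finset.univ : Finset Sg).biUnion fun σL =>
    Finset.univ.image fun t : Fin (2 * k - 4) =>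
      SpV.mid e.1 e.2 σL (π e.1 e.2 σL) t)

/-- The map `Φ` sending an edge of `E ∖ E_Outer` to the corresponding label set:
`Φ((c_i^l, c_{i,σ})) = {(c_i, σ)}`, `Φ((x_{j,σ}, x_j^l)) = {(x_j, σ)}`, and `Φ(e) = ∅` for
`e ∈ E_LStars ∪ E_M ∪ E_RStars`. -/
def Phi {L R Sg : Type} [Fintype Sg] {k K : ℕ}
    (e : Vt L R Sg k K × Vt L R Sg k K) : Finset ((L ⊕ R) × Sg) :=
  match e with
  | (Sum.inr (Sum.inl _), Sum.inl (i, σ)) => {(Sum.inl i, σ)}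
  | (Sum.inr (Sum.inr (Sum.inl (j, σ))), Sum.inr (Sum.inr (Sum.inr (Sum.inl _)))) =>
      {(Sum.inr j, σ)}
  | _ => ∅

/-- The fractional solution `y'` built from a solution `y*` of the projection games SDP:
`y'_S = 0` if `S` contains an edge of `E_Outer`, and `y'_S = y*_{Φ(S)}` otherwise
(where `Φ(S) = ⋃_{e ∈ S} Φ(e)`). -/
def yPrime {L R Sg : Type} [Fintype L] [Fintype R] [Fintype Sg]
    [DecidableEq L] [DecidableEq R] [DecidableEq Sg]
    (Eproj : Finset (L × R)) (k K : ℕ) (ystar : Finset ((L ⊕ R) × Sg) → ℝ)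
    (S : Finset (Vt L R Sg k K × Vt L R Sg k K)) : ℝ :=
  if (S ∩ EOuter Sg Eproj k K).Nonempty then 0 else ystar (S.biUnion Phi)

end Spanner


open Matrix

lemma psd_weighted {ι κ : Type*} [Fintype ι] [Fintype κ] [DecidableEq κ]
    {A : Matrix ι ι ℝ} (hA : A.PosSemidef) (f : κ → ι) (w : κ → ℝ) :
    (Matrix.of fun I J : κ => w I * w J * A (f I) (f J)).PosSemidef := by
  have heq : (Matrix.of fun I J : κ => w I * w J * A (f I) (f J))
      = Matrix.diagonal w * (A.submatrix f f) * (Matrix.diagonal w)ᴴ := by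
    ext I J
    simp [Matrix.mul_diagonal, Matrix.diagonal_mul, Matrix.submatrix_apply,
      Matrix.diagonal_conjTranspose]
    ring
  rw [heq]
  exact (hA.submatrix f).mul_mul_conjTranspose_same _

lemma qf_eq {κ : Type*} [Fintype κ] (M : Matrix κ κ ℝ) (x : κ → ℝ) :
    star x ⬝ᵥ M *ᵥ x = ∑ I, ∑ J, x I * x J * M I J := by
  simp only [dotProduct, Matrix.mulVec, Pi.star_apply, star_trivial, Finset.mul_sum]
  exact Finset.sum_congr rfl fun I _ => Finset.sum_congr rfl fun J _ => by ring

lemma qf_nonneg {κ : Type*} [Fintype κ] {M : Matrix κ κ ℝ} (hM : M.PosSemidef) (x : κ → ℝ) :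
    0 ≤ ∑ I, ∑ J, x I * x J * M I J := by
  rw [← qf_eq]; exact hM.dotProduct_mulVec_nonneg x

lemma core_ineq {α Sg : Type*} [Fintype Sg] [DecidableEq α] [DecidableEq Sg]
    (E : Finset α) (z : α → ℝ) (hz0 : ∀ e ∈ E, 0 ≤ z e)
    (v : α → ℝ) (hv : ∀ e, 0 ≤ v e)
    (q : Sg → ℝ) (hq : ∀ s, 0 ≤ q s)
    (σ σ0 : Sg) (d b : Sg → α) (a : α)
    (hdE : ∀ s, d s ∈ E) (hbE : ∀ s, s ≠ σ → s ≠ σ0 → b s ∈ E) (haE : σ ≠ σ0 → a ∈ E)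
    (hvd : ∀ s, v (d s) = q s)
    (hvb : ∀ s, s ≠ σ → s ≠ σ0 → v (b s) = ∑ t, q t)
    (hva : σ ≠ σ0 → v a = ∑ t, q t)
    (hdinj : Function.Injective d)
    (hbinj : ∀ s t, s ≠ σ → s ≠ σ0 → t ≠ σ → t ≠ σ0 → b s = b t → s = t)
    (hdb : ∀ s t, t ≠ σ → t ≠ σ0 → d s ≠ b t)
    (hda : ∀ s, σ ≠ σ0 → d s ≠ a)
    (hba : ∀ s, s ≠ σ → s ≠ σ0 → σ ≠ σ0 → b s ≠ a)
    (hz1 : 1 ≤ z (d σ))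
    (hz2 : σ ≠ σ0 → 1 ≤ z a + z (d σ0))
    (hz3 : ∀ s, s ≠ σ → s ≠ σ0 →
      1 ≤ (if σ = σ0 then z (b s) + z (d s) else z a + z (b s) + z (d s))) :
    ∑ s, q s ≤ ∑ e ∈ E, z e * v e := by
  classical
  set Q := ∑ t, q t with hQ
  have hqQ : ∀ s, q s ≤ Q := fun s => Finset.single_le_sum (fun t _ => hq t) (mem_univ s)
  set P : Finset Sg := univ.filter (fun s => s ≠ σ ∧ s ≠ σ0) with hP
  have hmemP : ∀ s, s ∈ P ↔ (s ≠ σ ∧ s ≠ σ0) := by intro s; simp [hP]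
  set F : Finset α := (univ.image d) ∪ (P.image b) ∪ (if σ = σ0 then (∅ : Finset α) else {a})
    with hF
  have hFE : F ⊆ E := by
    intro e he
    rw [hF] at he
    rcases mem_union.1 he with he | he
    · rcases mem_union.1 he with he | he
      · obtain ⟨s, _, rfl⟩ := mem_image.1 he; exact hdE s
      · obtain ⟨s, hs, rfl⟩ := mem_image.1 he
        exact hbE s ((hmemP s).1 hs).1 ((hmemP s).1 hs).2
    · by_cases h : σ = σ0
      · simp [h] at he
      · simp [h] at he; subst he; exact haE h
  have hstep1 : ∑ e ∈ F, z e * v e ≤ ∑ e ∈ E, z e * v e := by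
    apply Finset.sum_le_sum_of_subset_of_nonneg hFE
    intro e he _
    exact mul_nonneg (hz0 e he) (hv e)
  -- disjointness
  have hd1 : Disjoint (univ.image d) (P.image b) := by
    rw [Finset.disjoint_left]
    rintro e he1 he2
    obtain ⟨s, _, rfl⟩ := mem_image.1 he1
    obtain ⟨t, ht, hbt⟩ := mem_image.1 he2
    exact hdb s t ((hmemP t).1 ht).1 ((hmemP t).1 ht).2 hbt.symm
  have hd2 : Disjoint ((univ.image d) ∪ (P.image b)) (if σ = σ0 then (∅ : Finset α) else {a}) := by
    by_cases h : σ = σ0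
    · simp [h]
    · simp only [if_neg h]
      rw [Finset.disjoint_right]
      intro e he1 he2
      simp only [Finset.mem_singleton] at he1; subst he1
      rcases mem_union.1 he2 with he | he
      · obtain ⟨s, _, heq⟩ := mem_image.1 he; exact hda s h heq
      · obtain ⟨s, hs, heq⟩ := mem_image.1 he
        exact hba s ((hmemP s).1 hs).1 ((hmemP s).1 hs).2 h heq
  have hsplit : ∑ e ∈ F, z e * v e
      = (∑ s, z (d s) * q s) + (∑ s ∈ P, z (b s) * Q)
        + (if σ = σ0 then 0 else z a * Q) := by
    rw [hF, Finset.sum_union hd2, Finset.sum_union hd1]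
    congr 1
    · congr 1
      · rw [Finset.sum_image (fun s _ t _ h => hdinj h)]
        exact Finset.sum_congr rfl fun s _ => by rw [hvd s]
      · rw [Finset.sum_image (fun s hs t ht h =>
          hbinj s t ((hmemP s).1 hs).1 ((hmemP s).1 hs).2 ((hmemP t).1 ht).1 ((hmemP t).1 ht).2 h)]
        exact Finset.sum_congr rfl fun s hs => by
          rw [hvb s ((hmemP s).1 hs).1 ((hmemP s).1 hs).2]
    · by_cases h : σ = σ0 <;> simp [h, hva]
  -- coefficient function
  set c : Sg → ℝ := fun s => z (d s) + (if s ≠ σ ∧ s ≠ σ0 then z (b s) else 0)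
      + (if σ ≠ σ0 ∧ s ≠ σ then z a else 0) with hc
  have hc1 : ∀ s, 1 ≤ c s := by
    intro s
    simp only [hc]
    by_cases hs : s = σ
    · rw [if_neg (by simp [hs]), if_neg (by simp [hs]), hs]
      simpa using hz1
    · by_cases hs0 : s = σ0
      · have hσ : σ ≠ σ0 := by rw [← hs0]; exact fun h => hs h.symm
        rw [if_neg (show ¬(s ≠ σ ∧ s ≠ σ0) by tauto),
          if_pos (show σ ≠ σ0 ∧ s ≠ σ from ⟨hσ, hs⟩)]
        have h2 := hz2 hσ
        rw [← hs0] at h2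
        linarith
      · by_cases hσ : σ = σ0
        · have h3 := hz3 s hs hs0; rw [if_pos hσ] at h3
          rw [if_pos (show s ≠ σ ∧ s ≠ σ0 from ⟨hs, hs0⟩),
            if_neg (show ¬(σ ≠ σ0 ∧ s ≠ σ) by tauto)]
          linarith
        · have h3 := hz3 s hs hs0; rw [if_neg hσ] at h3
          rw [if_pos (show s ≠ σ ∧ s ≠ σ0 from ⟨hs, hs0⟩),
            if_pos (show σ ≠ σ0 ∧ s ≠ σ from ⟨hσ, hs⟩)]
          linarith
  have hstep2 : ∑ s, q s ≤ ∑ s, c s * q s := by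
    apply Finset.sum_le_sum
    intro s _
    nlinarith [hc1 s, hq s]
  have hstep3 : ∑ s, c s * q s ≤ (∑ s, z (d s) * q s) + (∑ s ∈ P, z (b s) * Q)
        + (if σ = σ0 then 0 else z a * Q) := by
    simp only [hc, add_mul]
    rw [Finset.sum_add_distrib, Finset.sum_add_distrib]
    gcongr ?_ + ?_ + ?_
    · exact le_refl _
    · have : ∀ s : Sg, (if s ≠ σ ∧ s ≠ σ0 then z (b s) else 0) * q s
          = if s ∈ P then z (b s) * q s else 0 := by
        intro s; by_cases h : s ≠ σ ∧ s ≠ σ0 <;> simp [h, hmemP, hP]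
      rw [Finset.sum_congr rfl fun s _ => this s, Finset.sum_ite_mem, univ_inter]
      apply Finset.sum_le_sum
      intro s hs
      have hb0 : 0 ≤ z (b s) := hz0 _ (hbE s ((hmemP s).1 hs).1 ((hmemP s).1 hs).2)
      exact mul_le_mul_of_nonneg_left (hqQ s) hb0
    · by_cases h : σ = σ0
      · simp [h]
      · simp only [if_neg h]
        have ha0 : 0 ≤ z a := hz0 a (haE h)
        have : ∀ s : Sg, (if σ ≠ σ0 ∧ s ≠ σ then z a else 0) * q s
            = if s ∈ univ.filter (fun s => s ≠ σ) then z a * q s else 0 := by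
          intro s; by_cases hs : s = σ <;> simp [h, hs]
        rw [Finset.sum_congr rfl fun s _ => this s, Finset.sum_ite_mem, univ_inter]
        rw [← Finset.mul_sum]
        apply mul_le_mul_of_nonneg_left _ ha0
        rw [hQ]
        apply Finset.sum_le_sum_of_subset_of_nonneg (Finset.filter_subset _ _)
        intro s _ _; exact hq s
  linarith
section AuxSpanner
open Matrix Spanner

variable {L R Sg : Type} [Fintype L] [Fintype R] [Fintype Sg]
  [DecidableEq L] [DecidableEq R] [DecidableEq Sg]

lemma card_Phi_le {k K : ℕ} (e : Vt L R Sg k K × Vt L R Sg k K) : (Phi e).card ≤ 1 := by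
  obtain ⟨u, v⟩ := e
  rcases u with u | u | u | u | u <;> rcases v with v | v | v | v | v <;>
    simp [Phi]

lemma card_PhiS_le {k K : ℕ} (S : Finset (Vt L R Sg k K × Vt L R Sg k K)) :
    (S.biUnion Phi).card ≤ S.card := by
  refine (Finset.card_biUnion_le).trans ?_
  calc ∑ e ∈ S, (Phi e).card ≤ ∑ e ∈ S, 1 :=
        Finset.sum_le_sum fun e _ => card_Phi_le e
    _ = S.card := by simp

lemma PhiS_union {k K : ℕ} (S T : Finset (Vt L R Sg k K × Vt L R Sg k K)) :
    (S ∪ T).biUnion Phi = S.biUnion Phi ∪ T.biUnion Phi := by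
  ext x
  simp only [Finset.mem_biUnion, Finset.mem_union]
  constructor
  · rintro ⟨e, he | he, hx⟩
    exacts [Or.inl ⟨e, he, hx⟩, Or.inr ⟨e, he, hx⟩]
  · rintro (⟨e, he, hx⟩ | ⟨e, he, hx⟩)
    exacts [⟨e, Or.inl he, hx⟩, ⟨e, Or.inr he, hx⟩]

end AuxSpanner
namespace AuxSp
open Matrix Spanner Finset

variable {L R Sg : Type} [Fintype L] [Fintype R] [Fintype Sg]
  [DecidableEq L] [DecidableEq R] [DecidableEq Sg]
  (Eproj : Finset (L × R)) (π : L → R → Sg → Sg) (σ0 : Sg) (k K r : ℕ)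
  (ystar : Finset ((L ⊕ R) × Sg) → ℝ)

/-- indicator that `S` misses `E_Outer` -/
def eps (S : Finset (Vt L R Sg k K × Vt L R Sg k K)) : ℝ :=
  if (S ∩ EOuter Sg Eproj k K).Nonempty then 0 else 1

/-- index type of the slack moment matrix -/
abbrev Idx := {S : Finset (Vt L R Sg k K × Vt L R Sg k K) //
  S ⊆ Edges Eproj π σ0 k K ∧ S.card ≤ r}

/-- the auxiliary PSD matrices -/
def matQ (Ψ₀ : Finset ((L ⊕ R) × Sg)) :
    Matrix (Idx Eproj π σ0 k K r) (Idx Eproj π σ0 k K r) ℝ :=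
  Matrix.of fun I J => eps Eproj k K I.1 * eps Eproj k K J.1 *
    ystar ((I.1.biUnion Phi ∪ J.1.biUnion Phi) ∪ Ψ₀)

lemma matQ_psd (hfeas : ProjFeasible (r + 2) ystar) (Ψ₀ : Finset ((L ⊕ R) × Sg))
    (hΨ₀ : Ψ₀.card ≤ 2) : (matQ Eproj π σ0 k K r ystar Ψ₀).PosSemidef := by
  have hA := hfeas.2.1
  have hkey := psd_weighted hA
    (f := fun I : Idx Eproj π σ0 k K r =>
      (⟨I.1.biUnion Phi ∪ Ψ₀, by
        refine (Finset.card_union_le _ _).trans ?_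
        have h1 := card_PhiS_le I.1
        have h2 := I.2.2
        omega⟩ : {S : Finset ((L ⊕ R) × Sg) // S.card ≤ r + 2}))
    (w := fun I => eps Eproj k K I.1)
  convert hkey using 1
  ext I J
  simp only [matQ, Matrix.of_apply]
  congr 2
  rw [Finset.union_union_union_comm, Finset.union_self]

lemma matQ_marginal (hfeas : ProjFeasible (r + 2) ystar) (w0 : L ⊕ R)
    (I J : Idx Eproj π σ0 k K r) :
    matQ Eproj π σ0 k K r ystar ∅ I J
      = ∑ s : Sg, matQ Eproj π σ0 k K r ystar {(w0, s)} I J := by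
  have hm := hfeas.2.2 w0 (I.1.biUnion Phi) (J.1.biUnion Phi)
    ((card_PhiS_le I.1).trans (I.2.2.trans (by omega)))
    ((card_PhiS_le J.1).trans (J.2.2.trans (by omega)))
  simp only [matQ, Matrix.of_apply, Finset.union_empty, ← Finset.mul_sum]
  congr 1
  rw [← hm]

lemma yPrime_eq_matQ (I J : Idx Eproj π σ0 k K r) :
    yPrime Eproj k K ystar (I.1 ∪ J.1) = matQ Eproj π σ0 k K r ystar ∅ I J := by
  have hsplit : ((I.1 ∪ J.1) ∩ EOuter Sg Eproj k K).Nonempty ↔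
      (I.1 ∩ EOuter Sg Eproj k K).Nonempty ∨ (J.1 ∩ EOuter Sg Eproj k K).Nonempty := by
    rw [Finset.union_inter_distrib_right]
    constructor
    · rintro ⟨x, hx⟩
      rcases Finset.mem_union.1 hx with h | h
      exacts [Or.inl ⟨x, h⟩, Or.inr ⟨x, h⟩]
    · rintro (⟨x, h⟩ | ⟨x, h⟩)
      exacts [⟨x, Finset.mem_union_left _ h⟩, ⟨x, Finset.mem_union_right _ h⟩]
  by_cases hI : (I.1 ∩ EOuter Sg Eproj k K).Nonempty <;>
    by_cases hJ : (J.1 ∩ EOuter Sg Eproj k K).Nonempty <;>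
      simp [yPrime, matQ, eps, hsplit, hI, hJ, PhiS_union]

lemma yPrime_insert_outer {e : Vt L R Sg k K × Vt L R Sg k K}
    (he : e ∈ EOuter Sg Eproj k K) (S : Finset (Vt L R Sg k K × Vt L R Sg k K)) :
    yPrime Eproj k K ystar (insert e S) = 0 := by
  rw [yPrime, if_pos ⟨e, Finset.mem_inter.2 ⟨Finset.mem_insert_self e S, he⟩⟩]

lemma yPrime_insert_eq_matQ {e : Vt L R Sg k K × Vt L R Sg k K}
    (he : e ∉ EOuter Sg Eproj k K) (I J : Idx Eproj π σ0 k K r) :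
    yPrime Eproj k K ystar (insert e (I.1 ∪ J.1))
      = matQ Eproj π σ0 k K r ystar (Phi e) I J := by
  have hiff : ((insert e (I.1 ∪ J.1)) ∩ EOuter Sg Eproj k K).Nonempty ↔
      ((I.1 ∪ J.1) ∩ EOuter Sg Eproj k K).Nonempty := by
    constructor
    · rintro ⟨x, hx⟩
      rw [Finset.mem_inter] at hx
      rcases Finset.mem_insert.1 hx.1 with h | h
      · exact absurd (h ▸ hx.2) he
      · exact ⟨x, Finset.mem_inter.2 ⟨h, hx.2⟩⟩
    · rintro ⟨x, hx⟩
      rw [Finset.mem_inter] at hx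
      exact ⟨x, Finset.mem_inter.2 ⟨Finset.mem_insert_of_mem hx.1, hx.2⟩⟩
  have hsplit : ((I.1 ∪ J.1) ∩ EOuter Sg Eproj k K).Nonempty ↔
      (I.1 ∩ EOuter Sg Eproj k K).Nonempty ∨ (J.1 ∩ EOuter Sg Eproj k K).Nonempty := by
    rw [Finset.union_inter_distrib_right]
    constructor
    · rintro ⟨x, hx⟩
      rcases Finset.mem_union.1 hx with h | h
      exacts [Or.inl ⟨x, h⟩, Or.inr ⟨x, h⟩]
    · rintro (⟨x, h⟩ | ⟨x, h⟩)
      exacts [⟨x, Finset.mem_union_left _ h⟩, ⟨x, Finset.mem_union_right _ h⟩]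
  rw [yPrime]
  by_cases hI : (I.1 ∩ EOuter Sg Eproj k K).Nonempty <;>
    by_cases hJ : (J.1 ∩ EOuter Sg Eproj k K).Nonempty
  · rw [if_pos (hiff.2 (hsplit.2 (Or.inl hI)))]; simp [matQ, eps, hI, hJ]
  · rw [if_pos (hiff.2 (hsplit.2 (Or.inl hI)))]; simp [matQ, eps, hI, hJ]
  · rw [if_pos (hiff.2 (hsplit.2 (Or.inr hJ)))]; simp [matQ, eps, hI, hJ]
  · rw [if_neg (fun h => by rcases hsplit.1 (hiff.1 h) with h | h <;> tauto)]
    simp only [matQ, eps, Matrix.of_apply, if_neg hI, if_neg hJ, one_mul]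
    congr 1
    rw [Finset.biUnion_insert, PhiS_union, Finset.union_comm]

lemma slack_psd_core
    (hfeas : ProjFeasible (r + 2) ystar)
    (z : Vt L R Sg k K × Vt L R Sg k K → ℝ)
    (hz0 : ∀ e ∈ Edges Eproj π σ0 k K, 0 ≤ z e)
    (w0 : L ⊕ R) (σ : Sg)
    (d b : Sg → Vt L R Sg k K × Vt L R Sg k K) (a : Vt L R Sg k K × Vt L R Sg k K)
    (hd : ∀ s, d s ∈ Edges Eproj π σ0 k K ∧ d s ∉ EOuter Sg Eproj k K ∧
      Phi (d s) = {(w0, s)})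
    (hb : ∀ s, s ≠ σ → s ≠ σ0 → b s ∈ Edges Eproj π σ0 k K ∧
      b s ∉ EOuter Sg Eproj k K ∧ Phi (b s) = ∅)
    (ha : σ ≠ σ0 → a ∈ Edges Eproj π σ0 k K ∧ a ∉ EOuter Sg Eproj k K ∧ Phi a = ∅)
    (hdinj : Function.Injective d)
    (hbinj : ∀ s t, s ≠ σ → s ≠ σ0 → t ≠ σ → t ≠ σ0 → b s = b t → s = t)
    (hdb : ∀ s t, t ≠ σ → t ≠ σ0 → d s ≠ b t)
    (hda : ∀ s, σ ≠ σ0 → d s ≠ a)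
    (hba : ∀ s, s ≠ σ → s ≠ σ0 → σ ≠ σ0 → b s ≠ a)
    (hz1 : 1 ≤ z (d σ))
    (hz2 : σ ≠ σ0 → 1 ≤ z a + z (d σ0))
    (hz3 : ∀ s, s ≠ σ → s ≠ σ0 →
      1 ≤ (if σ = σ0 then z (b s) + z (d s) else z a + z (b s) + z (d s))) :
    (slackMatrixE (Edges Eproj π σ0 k K) r (yPrime Eproj k K ystar) z).PosSemidef := by
  classical
  refine Matrix.PosSemidef.of_dotProduct_mulVec_nonneg ?_ ?_
  · ext I J
    simp only [slackMatrixE, Matrix.conjTranspose_apply, Matrix.of_apply, star_trivial]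
    rw [Finset.union_comm J.1 I.1]
  · intro x
    rw [qf_eq]
    -- scalar version of the auxiliary matrices
    set mvE : (Vt L R Sg k K × Vt L R Sg k K) → Idx Eproj π σ0 k K r →
        Idx Eproj π σ0 k K r → ℝ := fun e I J =>
      if e ∈ EOuter Sg Eproj k K then 0 else matQ Eproj π σ0 k K r ystar (Phi e) I J
      with hmvE
    set q : Sg → ℝ := fun s =>
      ∑ I, ∑ J, x I * x J * matQ Eproj π σ0 k K r ystar {(w0, s)} I J with hq'
    set v : (Vt L R Sg k K × Vt L R Sg k K) → ℝ := fun e =>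
      ∑ I, ∑ J, x I * x J * mvE e I J with hv'
    have hswap : ∀ {β : Type} (T : Finset β)
        (f : Idx Eproj π σ0 k K r → Idx Eproj π σ0 k K r → β → ℝ),
        ∑ I, ∑ J, ∑ t ∈ T, f I J t = ∑ t ∈ T, ∑ I, ∑ J, f I J t := by
      intro β T f
      calc ∑ I, ∑ J, ∑ t ∈ T, f I J t
          = ∑ I, ∑ t ∈ T, ∑ J, f I J t :=
            Finset.sum_congr rfl fun I _ => Finset.sum_comm
        _ = ∑ t ∈ T, ∑ I, ∑ J, f I J t := Finset.sum_comm
    have hQ : ∑ I, ∑ J, x I * x J * matQ Eproj π σ0 k K r ystar ∅ I J = ∑ s, q s := by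
      calc ∑ I, ∑ J, x I * x J * matQ Eproj π σ0 k K r ystar ∅ I J
          = ∑ I, ∑ J, ∑ s : Sg, x I * x J * matQ Eproj π σ0 k K r ystar {(w0, s)} I J := by
            refine Finset.sum_congr rfl fun I _ => Finset.sum_congr rfl fun J _ => ?_
            rw [matQ_marginal Eproj π σ0 k K r ystar hfeas w0 I J, Finset.mul_sum]
        _ = ∑ s, q s := hswap Finset.univ _
    have hkey : ∑ I, ∑ J, x I * x J * slackMatrixE (Edges Eproj π σ0 k K) r
          (yPrime Eproj k K ystar) z I J
        = (∑ e ∈ Edges Eproj π σ0 k K, z e * v e) - ∑ s, q s := by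
      have h1 : ∀ I J : Idx Eproj π σ0 k K r,
          slackMatrixE (Edges Eproj π σ0 k K) r (yPrime Eproj k K ystar) z I J
            = (∑ e ∈ Edges Eproj π σ0 k K, z e * mvE e I J)
              - matQ Eproj π σ0 k K r ystar ∅ I J := by
        intro I J
        simp only [slackMatrixE, Matrix.of_apply]
        rw [yPrime_eq_matQ Eproj π σ0 k K r ystar I J]
        congr 1
        refine Finset.sum_congr rfl fun e he => ?_
        congr 1
        simp only [hmvE]
        by_cases hout : e ∈ EOuter Sg Eproj k K
        · rw [if_pos hout, yPrime_insert_outer Eproj k K ystar hout]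
        · rw [if_neg hout, yPrime_insert_eq_matQ Eproj π σ0 k K r ystar hout I J]
      calc ∑ I, ∑ J, x I * x J * slackMatrixE (Edges Eproj π σ0 k K) r
            (yPrime Eproj k K ystar) z I J
          = ∑ I, ∑ J, ((∑ e ∈ Edges Eproj π σ0 k K, x I * x J * (z e * mvE e I J))
              - x I * x J * matQ Eproj π σ0 k K r ystar ∅ I J) := by
            refine Finset.sum_congr rfl fun I _ => Finset.sum_congr rfl fun J _ => ?_
            rw [h1 I J, mul_sub, Finset.mul_sum]
        _ = (∑ I, ∑ J, ∑ e ∈ Edges Eproj π σ0 k K, x I * x J * (z e * mvE e I J))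
            - ∑ I, ∑ J, x I * x J * matQ Eproj π σ0 k K r ystar ∅ I J := by
            simp only [Finset.sum_sub_distrib]
        _ = (∑ e ∈ Edges Eproj π σ0 k K, ∑ I, ∑ J, x I * x J * (z e * mvE e I J))
            - ∑ s, q s := by rw [hswap, hQ]
        _ = (∑ e ∈ Edges Eproj π σ0 k K, z e * v e) - ∑ s, q s := by
            congr 1
            refine Finset.sum_congr rfl fun e _ => ?_
            simp only [hv', Finset.mul_sum]
            exact Finset.sum_congr rfl fun I _ =>
              Finset.sum_congr rfl fun J _ => by ring
    rw [hkey, sub_nonneg]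
    have hqnn : ∀ s, 0 ≤ q s := fun s =>
      qf_nonneg (matQ_psd Eproj π σ0 k K r ystar hfeas {(w0, s)} (by simp)) x
    have hvnn : ∀ e, 0 ≤ v e := by
      intro e
      simp only [hv']
      by_cases hout : e ∈ EOuter Sg Eproj k K
      · simp [hmvE, hout]
      · simp only [hmvE, if_neg hout]
        exact qf_nonneg (matQ_psd Eproj π σ0 k K r ystar hfeas (Phi e)
          ((card_Phi_le e).trans (by norm_num))) x
    refine core_ineq (Edges Eproj π σ0 k K) z hz0 v hvnn q hqnn σ σ0 d b a
      (fun s => (hd s).1) (fun s h1 h2 => (hb s h1 h2).1) (fun h => (ha h).1)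
      ?_ ?_ ?_ hdinj hbinj hdb hda hba hz1 hz2 hz3
    · intro s
      simp only [hv', hq']
      refine Finset.sum_congr rfl fun I _ => Finset.sum_congr rfl fun J _ => ?_
      simp only [hmvE]
      simp only [if_neg (hd s).2.1, (hd s).2.2]
    · intro s h1 h2
      rw [← hQ]
      simp only [hv']
      refine Finset.sum_congr rfl fun I _ => Finset.sum_congr rfl fun J _ => ?_
      simp only [hmvE]
      simp only [if_neg (hb s h1 h2).2.1, (hb s h1 h2).2.2]
    · intro h
      rw [← hQ]
      simp only [hv']
      refine Finset.sum_congr rfl fun I _ => Finset.sum_congr rfl fun J _ => ?_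
      simp only [hmvE]
      simp only [if_neg (ha h).2.1, (ha h).2.2]

lemma mem_Edges_EL (i : L) (l : Fin (numDup Sg k K)) (s : Sg) :
    (SpV.cDup i l, SpV.cLab i s) ∈ Edges Eproj π σ0 k K := by
  simp only [Edges, Finset.mem_union]
  exact Or.inl (Or.inl (Or.inl (Or.inl (Or.inl
    (Finset.mem_image.2 ⟨(i, l, s), Finset.mem_univ _, rfl⟩)))))

lemma mem_Edges_ELS1 (i : L) (s : Sg) (hs : s ≠ σ0) :
    ((SpV.cLab i σ0 : Vt L R Sg k K), SpV.cLab i s) ∈ Edges Eproj π σ0 k K := by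
  simp only [Edges, Finset.mem_union]
  refine Or.inl (Or.inl (Or.inl (Or.inl (Or.inr ?_))))
  exact Finset.mem_union_left _ (Finset.mem_image.2
    ⟨(i, s), Finset.mem_filter.2 ⟨Finset.mem_univ _, hs⟩, rfl⟩)

lemma mem_Edges_ELS2 (i : L) (s : Sg) (hs : s ≠ σ0) :
    ((SpV.cLab i s : Vt L R Sg k K), SpV.cLab i σ0) ∈ Edges Eproj π σ0 k K := by
  simp only [Edges, Finset.mem_union]
  refine Or.inl (Or.inl (Or.inl (Or.inl (Or.inr ?_))))
  exact Finset.mem_union_right _ (Finset.mem_image.2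
    ⟨(i, s), Finset.mem_filter.2 ⟨Finset.mem_univ _, hs⟩, rfl⟩)

lemma mem_Edges_ER (j : R) (l : Fin (numDup Sg k K)) (s : Sg) :
    (SpV.xLab j s, SpV.xDup j l) ∈ Edges Eproj π σ0 k K := by
  simp only [Edges, Finset.mem_union]
  exact Or.inl (Or.inr (Finset.mem_image.2 ⟨(j, l, s), Finset.mem_univ _, rfl⟩))

lemma mem_Edges_ERS1 (j : R) (s : Sg) (hs : s ≠ σ0) :
    ((SpV.xLab j σ0 : Vt L R Sg k K), SpV.xLab j s) ∈ Edges Eproj π σ0 k K := by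
  simp only [Edges, Finset.mem_union]
  refine Or.inl (Or.inl (Or.inr ?_))
  exact Finset.mem_union_left _ (Finset.mem_image.2
    ⟨(j, s), Finset.mem_filter.2 ⟨Finset.mem_univ _, hs⟩, rfl⟩)

lemma mem_Edges_ERS2 (j : R) (s : Sg) (hs : s ≠ σ0) :
    ((SpV.xLab j s : Vt L R Sg k K), SpV.xLab j σ0) ∈ Edges Eproj π σ0 k K := by
  simp only [Edges, Finset.mem_union]
  refine Or.inl (Or.inl (Or.inr ?_))
  exact Finset.mem_union_right _ (Finset.mem_image.2
    ⟨(j, s), Finset.mem_filter.2 ⟨Finset.mem_univ _, hs⟩, rfl⟩)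

lemma not_outer_cLab_snd (u : Vt L R Sg k K) (i : L) (s : Sg) :
    (u, SpV.cLab i s) ∉ EOuter Sg Eproj k K := by
  simp [EOuter, SpV.cLab, SpV.cDup, SpV.xDup, Prod.ext_iff]

lemma not_outer_xLab_fst (j : R) (s : Sg) (v : Vt L R Sg k K) :
    (SpV.xLab j s, v) ∉ EOuter Sg Eproj k K := by
  simp [EOuter, SpV.xLab, SpV.cDup, SpV.xDup, Prod.ext_iff]

end AuxSp

/-- Theorem `slack:E_LE_R`.  For the directed spanner instance `G = (V,E)`
built (with parameters `k ≥ 2`, `K ≥ 1`) from a projection games instance in which every left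
vertex has degree exactly `K`, and the fractional solution `y'` built from a feasible solution
`y*` of `SDP_Proj^{r+2}`: for every edge `(u,v) ∈ E_L ∪ E_R` and every `z ∈ Z^{u,v}` (with
respect to stretch `2k−1`), the slack moment matrix
`(∑_{e∈E} z e · y'_{I∪J∪{e}} − y'_{I∪J})_{I,J ⊆ E, |I|,|J| ≤ r}` is positive semidefinite. -/
theorem directed_spanner_slack_psd_connection_edges
    {L R Sg : Type} [Fintype L] [Fintype R] [Fintype Sg]
    [DecidableEq L] [DecidableEq R] [DecidableEq Sg]
    (Eproj : Finset (L × R)) (π : L → R → Sg → Sg) (σ0 : Sg) (k K : ℕ)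
    (hk : 2 ≤ k) (hK : 1 ≤ K)
    (hdeg : ∀ i : L, (Eproj.filter fun e => e.1 = i).card = K)
    (r : ℕ) (ystar : Finset ((L ⊕ R) × Sg) → ℝ)
    (hfeas : ProjFeasible (r + 2) ystar) :
    ∀ e ∈ Spanner.ELedges L R Sg k K ∪ Spanner.ERedges L R Sg k K,
      ∀ z : Spanner.Vt L R Sg k K × Spanner.Vt L R Sg k K → ℝ,
        InZ (Spanner.Edges Eproj π σ0 k K) (2 * k - 1) e.1 e.2 z →
        (slackMatrixE (Spanner.Edges Eproj π σ0 k K) r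
          (Spanner.yPrime Eproj k K ystar) z).PosSemidef := by
  classical
  intro e he z hz
  have hz0 : ∀ f ∈ Spanner.Edges Eproj π σ0 k K, 0 ≤ z f := fun f hf => (hz.1 f hf).1
  have hlen1 : (1 : ℕ) ≤ 2 * k - 1 := by omega
  have hlen2 : (2 : ℕ) ≤ 2 * k - 1 := by omega
  have hlen3 : (3 : ℕ) ≤ 2 * k - 1 := by omega
  rcases Finset.mem_union.1 he with heL | heR
  · obtain ⟨⟨i, l, σ⟩, -, rfl⟩ := Finset.mem_image.1 heL
    refine AuxSp.slack_psd_core Eproj π σ0 k K r ystar hfeas z hz0 (Sum.inl i) σ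
      (fun s => (SpV.cDup i l, SpV.cLab i s))
      (fun s => (SpV.cLab i s, SpV.cLab i σ0))
      (SpV.cLab i σ0, SpV.cLab i σ)
      (fun s => ⟨AuxSp.mem_Edges_EL Eproj π σ0 k K i l s,
        AuxSp.not_outer_cLab_snd Eproj k K _ i s, rfl⟩)
      (fun s _ hs0 => ⟨AuxSp.mem_Edges_ELS2 Eproj π σ0 k K i s hs0,
        AuxSp.not_outer_cLab_snd Eproj k K _ i σ0, rfl⟩)
      (fun hσ => ⟨AuxSp.mem_Edges_ELS1 Eproj π σ0 k K i σ hσ,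
        AuxSp.not_outer_cLab_snd Eproj k K _ i σ, rfl⟩)
      ?_ ?_ ?_ ?_ ?_ ?_ ?_ ?_
    · -- d injective
      intro s t h
      simp [SpV.cDup, SpV.cLab, Prod.ext_iff] at h
      exact h
    · -- b injective
      intro s t _ _ _ _ h
      simp [SpV.cLab, Prod.ext_iff] at h
      exact h
    · -- d ≠ b
      intro s t _ _
      simp [SpV.cDup, SpV.cLab, Prod.ext_iff]
    · -- d ≠ a
      intro s _
      simp [SpV.cDup, SpV.cLab, Prod.ext_iff]
    · -- b ≠ a
      intro s hsσ hs0 hσ hcon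
      have := congrArg Prod.fst hcon
      simp [SpV.cLab] at this
      exact hs0 this
    · -- hz1
      have h := hz.2 [(SpV.cDup i l, SpV.cLab i σ)]
        ⟨by simp, ?_, by simp, by simp, by simp [List.Chain'], ?_⟩ (by simpa using hlen1)
      · simpa using h
      · intro f hf
        simp at hf
        subst hf
        exact AuxSp.mem_Edges_EL Eproj π σ0 k K i l σ
      · simp [SpV.cDup, SpV.cLab]
    · -- hz2
      intro hσ
      have h := hz.2 [(SpV.cDup i l, SpV.cLab i σ0), (SpV.cLab i σ0, SpV.cLab i σ)]
        ⟨by simp, ?_, by simp, by simp, by simp [List.Chain'], ?_⟩ (by simpa using hlen2)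
      · simp at h
        linarith
      · intro f hf
        simp at hf
        rcases hf with hf | hf <;> subst hf
        · exact AuxSp.mem_Edges_EL Eproj π σ0 k K i l σ0
        · exact AuxSp.mem_Edges_ELS1 Eproj π σ0 k K i σ hσ
      · simp [SpV.cDup, SpV.cLab, hσ, Ne.symm hσ]
    · -- hz3
      intro s hs hs0
      by_cases hσ : σ = σ0
      · rw [if_pos hσ]
        have h := hz.2 [(SpV.cDup i l, SpV.cLab i s), (SpV.cLab i s, SpV.cLab i σ0)]
          ⟨by simp, ?_, by simp, by simp [hσ], by simp [List.Chain'], ?_⟩ (by simpa using hlen2)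
        · simp at h
          linarith
        · intro f hf
          simp at hf
          rcases hf with hf | hf <;> subst hf
          · exact AuxSp.mem_Edges_EL Eproj π σ0 k K i l s
          · exact AuxSp.mem_Edges_ELS2 Eproj π σ0 k K i s hs0
        · simp [SpV.cDup, SpV.cLab, hs0, Ne.symm hs0]
      · rw [if_neg hσ]
        have h := hz.2 [(SpV.cDup i l, SpV.cLab i s), (SpV.cLab i s, SpV.cLab i σ0),
            (SpV.cLab i σ0, SpV.cLab i σ)]
          ⟨by simp, ?_, by simp, by simp, by simp [List.Chain'], ?_⟩ (by simpa using hlen3)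
        · simp at h
          linarith
        · intro f hf
          simp at hf
          rcases hf with hf | hf | hf <;> subst hf
          · exact AuxSp.mem_Edges_EL Eproj π σ0 k K i l s
          · exact AuxSp.mem_Edges_ELS2 Eproj π σ0 k K i s hs0
          · exact AuxSp.mem_Edges_ELS1 Eproj π σ0 k K i σ hσ
        · simp [SpV.cDup, SpV.cLab, hs, Ne.symm hs, hs0, Ne.symm hs0, hσ, Ne.symm hσ]
  · obtain ⟨⟨j, l, σ⟩, -, rfl⟩ := Finset.mem_image.1 heR
    refine AuxSp.slack_psd_core Eproj π σ0 k K r ystar hfeas z hz0 (Sum.inr j) σ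
      (fun s => (SpV.xLab j s, SpV.xDup j l))
      (fun s => (SpV.xLab j σ0, SpV.xLab j s))
      (SpV.xLab j σ, SpV.xLab j σ0)
      (fun s => ⟨AuxSp.mem_Edges_ER Eproj π σ0 k K j l s,
        AuxSp.not_outer_xLab_fst Eproj k K j s _, rfl⟩)
      (fun s _ hs0 => ⟨AuxSp.mem_Edges_ERS1 Eproj π σ0 k K j s hs0,
        AuxSp.not_outer_xLab_fst Eproj k K j σ0 _, rfl⟩)
      (fun hσ => ⟨AuxSp.mem_Edges_ERS2 Eproj π σ0 k K j σ hσ,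
        AuxSp.not_outer_xLab_fst Eproj k K j σ _, rfl⟩)
      ?_ ?_ ?_ ?_ ?_ ?_ ?_ ?_
    · intro s t h
      simp [SpV.xLab, SpV.xDup, Prod.ext_iff] at h
      exact h
    · intro s t _ _ _ _ h
      simp [SpV.xLab, Prod.ext_iff] at h
      exact h
    · intro s t _ _
      simp [SpV.xLab, SpV.xDup, Prod.ext_iff]
    · intro s hσ
      simp [SpV.xLab, SpV.xDup, Prod.ext_iff]
    · intro s hsσ hs0 hσ hcon
      have := congrArg Prod.fst hcon
      simp [SpV.xLab] at this
      exact hσ this.symm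
    · have h := hz.2 [(SpV.xLab j σ, SpV.xDup j l)]
        ⟨by simp, ?_, by simp, by simp, by simp [List.Chain'], ?_⟩ (by simpa using hlen1)
      · simpa using h
      · intro f hf
        simp at hf
        subst hf
        exact AuxSp.mem_Edges_ER Eproj π σ0 k K j l σ
      · simp [SpV.xDup, SpV.xLab]
    · intro hσ
      have h := hz.2 [(SpV.xLab j σ, SpV.xLab j σ0), (SpV.xLab j σ0, SpV.xDup j l)]
        ⟨by simp, ?_, by simp, by simp, by simp [List.Chain'], ?_⟩ (by simpa using hlen2)
      · simp at h
        linarith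
      · intro f hf
        simp at hf
        rcases hf with hf | hf <;> subst hf
        · exact AuxSp.mem_Edges_ERS2 Eproj π σ0 k K j σ hσ
        · exact AuxSp.mem_Edges_ER Eproj π σ0 k K j l σ0
      · simp [SpV.xDup, SpV.xLab, hσ, Ne.symm hσ]
    · intro s hs hs0
      by_cases hσ : σ = σ0
      · rw [if_pos hσ]
        have h := hz.2 [(SpV.xLab j σ0, SpV.xLab j s), (SpV.xLab j s, SpV.xDup j l)]
          ⟨by simp, ?_, by simp [hσ], by simp, by simp [List.Chain'], ?_⟩ (by simpa using hlen2)
        · simp at h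
          linarith
        · intro f hf
          simp at hf
          rcases hf with hf | hf <;> subst hf
          · exact AuxSp.mem_Edges_ERS1 Eproj π σ0 k K j s hs0
          · exact AuxSp.mem_Edges_ER Eproj π σ0 k K j l s
        · simp [SpV.xDup, SpV.xLab, hs, Ne.symm hs]
      · rw [if_neg hσ]
        have h := hz.2 [(SpV.xLab j σ, SpV.xLab j σ0), (SpV.xLab j σ0, SpV.xLab j s),
            (SpV.xLab j s, SpV.xDup j l)]
          ⟨by simp, ?_, by simp, by simp, by simp [List.Chain'], ?_⟩ (by simpa using hlen3)
        · simp at h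
          linarith
        · intro f hf
          simp at hf
          rcases hf with hf | hf | hf <;> subst hf
          · exact AuxSp.mem_Edges_ERS2 Eproj π σ0 k K j σ hσ
          · exact AuxSp.mem_Edges_ERS1 Eproj π σ0 k K j s hs0
          · exact AuxSp.mem_Edges_ER Eproj π σ0 k K j l s
        · simp [SpV.xDup, SpV.xLab, hs, Ne.symm hs, hs0, Ne.symm hs0, hσ, Ne.symm hσ]
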